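/- Let a > 0, P > 0, ρ > 0, and let g, ĝ ∈ ℂ^{N_R×N_T} satisfy ‖g‖ ≤ a and ‖ĝ‖ ≤ a in operator norm. Let t_1,…,t_n ∈ ℂ^{N_T} and z_1,…,z_n ∈ ℂ^{N_R} satisfy (1/n) ∑_{i=1}^n ‖t_i‖² ≤ P and (1/n) ∑_{i=1}^n ‖z_i‖² ≤ ρ. Then ∑_{i=1}^n (‖z_i − ĝ t_i‖² − ‖z_i − g t_i‖²) ≤ 2n(√(Pρ) + aP) · ‖g − ĝ‖. Consequently, the ratio of the Gaussian channel densities satisfies ∏_{i=1}^n exp(−σ^{-2}‖z_i − g t_i‖²) / ∏_{i=1}^n exp(−σ^{-2}‖z_i − ĝ t_i‖²) ≤ 2^{(2n/(σ² ln 2))(√(Pρ) + aP)‖g − ĝ‖} for any σ > 0. -/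

import Mathlib

/-- The operator norm of a complex matrix with respect to the Euclidean norms. -/
noncomputable def matOpNorm {nR nT : ℕ} (g : Matrix (Fin nR) (Fin nT) ℂ) : ℝ :=
  ‖LinearMap.toContinuousLinearMap (Matrix.toEuclideanLin g)‖

lemma matOpNorm_nonneg {nR nT : ℕ} (g : Matrix (Fin nR) (Fin nT) ℂ) : 0 ≤ matOpNorm g :=
  norm_nonneg _

lemma matOpNorm_mulVec_le {nR nT : ℕ} (M : Matrix (Fin nR) (Fin nT) ℂ)
    (v : EuclideanSpace ℂ (Fin nT)) :
    ‖Matrix.toEuclideanLin M v‖ ≤ matOpNorm M * ‖v‖ :=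
  (LinearMap.toContinuousLinearMap (Matrix.toEuclideanLin M)).le_opNorm v

lemma euclid_norm_sq {k : ℕ} (x : EuclideanSpace ℂ (Fin k)) :
    ‖x‖ ^ 2 = ∑ j, ‖x j‖ ^ 2 := by
  rw [EuclideanSpace.norm_eq, Real.sq_sqrt]
  positivity

lemma key_pointwise {nR nT : ℕ} (a : ℝ) (g g' : Matrix (Fin nR) (Fin nT) ℂ)
    (hg : matOpNorm g ≤ a) (hg' : matOpNorm g' ≤ a)
    (Z : EuclideanSpace ℂ (Fin nR)) (T : EuclideanSpace ℂ (Fin nT)) :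
    ‖Z - Matrix.toEuclideanLin g' T‖ ^ 2 - ‖Z - Matrix.toEuclideanLin g T‖ ^ 2 ≤
      2 * matOpNorm (g - g') * (a * ‖T‖ ^ 2 + ‖Z‖ * ‖T‖) := by
  set u : EuclideanSpace ℂ (Fin nR) := Matrix.toEuclideanLin g T with hu
  set u' : EuclideanSpace ℂ (Fin nR) := Matrix.toEuclideanLin g' T with hu'
  have hdiff : u - u' = Matrix.toEuclideanLin (g - g') T := by
    rw [hu, hu', map_sub, LinearMap.sub_apply]
  have hC : ‖u - u'‖ ≤ matOpNorm (g - g') * ‖T‖ := by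
    rw [hdiff]; exact matOpNorm_mulVec_le _ _
  have hun : ‖u‖ ≤ a * ‖T‖ :=
    (matOpNorm_mulVec_le g T).trans (by nlinarith [norm_nonneg T])
  have hun' : ‖u'‖ ≤ a * ‖T‖ :=
    (matOpNorm_mulVec_le g' T).trans (by nlinarith [norm_nonneg T])
  have h1 : ‖Z - u‖ ^ 2 = ‖Z‖ ^ 2 - 2 * RCLike.re (inner ℂ Z u) + ‖u‖ ^ 2 :=
    norm_sub_sq (𝕜 := ℂ) Z u
  have h2 : ‖Z - u'‖ ^ 2 = ‖Z‖ ^ 2 - 2 * RCLike.re (inner ℂ Z u') + ‖u'‖ ^ 2 :=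
    norm_sub_sq (𝕜 := ℂ) Z u'
  have hre : RCLike.re (inner ℂ Z u) - RCLike.re (inner ℂ Z u') ≤
      ‖Z‖ * (matOpNorm (g - g') * ‖T‖) := by
    have : RCLike.re (inner ℂ Z u) - RCLike.re (inner ℂ Z u') =
        RCLike.re (inner ℂ Z (u - u')) := by
      rw [inner_sub_right, map_sub]
    rw [this]
    exact (re_inner_le_norm Z (u - u')).trans
      (mul_le_mul_of_nonneg_left hC (norm_nonneg Z))
  have hsqdiff : ‖u'‖ ^ 2 - ‖u‖ ^ 2 ≤ matOpNorm (g - g') * ‖T‖ * (2 * (a * ‖T‖)) := by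
    have h3 : ‖u'‖ - ‖u‖ ≤ ‖u - u'‖ := by
      have := norm_sub_norm_le u' u
      rw [norm_sub_rev] at this
      linarith
    nlinarith [norm_nonneg u, norm_nonneg u', norm_nonneg (u - u'), hC]
  nlinarith [hre, hsqdiff]

theorem gaussian_density_ratio_bound
    (nT nR n : ℕ) (hnT : 1 ≤ nT) (hnR : 1 ≤ nR) (hn : 1 ≤ n)
    (a P ρ σ : ℝ) (ha : 0 < a) (hP : 0 < P) (hρ : 0 < ρ) (hσ : 0 < σ)
    (g g' : Matrix (Fin nR) (Fin nT) ℂ) (hg : matOpNorm g ≤ a) (hg' : matOpNorm g' ≤ a)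
    (t : Fin n → Fin nT → ℂ) (z : Fin n → Fin nR → ℂ)
    (ht : (n : ℝ)⁻¹ * ∑ i, ∑ j, ‖t i j‖ ^ 2 ≤ P)
    (hz : (n : ℝ)⁻¹ * ∑ i, ∑ j, ‖z i j‖ ^ 2 ≤ ρ) :
    (∑ i, ((∑ j, ‖z i j - g'.mulVec (t i) j‖ ^ 2) - ∑ j, ‖z i j - g.mulVec (t i) j‖ ^ 2) ≤
        2 * n * (Real.sqrt (P * ρ) + a * P) * matOpNorm (g - g')) ∧
      (∏ i, Real.exp (-(σ ^ 2)⁻¹ * ∑ j, ‖z i j - g.mulVec (t i) j‖ ^ 2)) /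
          (∏ i, Real.exp (-(σ ^ 2)⁻¹ * ∑ j, ‖z i j - g'.mulVec (t i) j‖ ^ 2)) ≤
        (2 : ℝ) ^ ((2 * n / (σ ^ 2 * Real.log 2)) * (Real.sqrt (P * ρ) + a * P) *
          matOpNorm (g - g')) := by
  have hn0 : (0 : ℝ) < n := by exact_mod_cast hn
  set C : ℝ := matOpNorm (g - g') with hCdef
  have hC0 : 0 ≤ C := matOpNorm_nonneg _
  set T : Fin n → EuclideanSpace ℂ (Fin nT) :=
    fun i => (WithLp.equiv 2 (Fin nT → ℂ)).symm (t i) with hT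
  set Z : Fin n → EuclideanSpace ℂ (Fin nR) :=
    fun i => (WithLp.equiv 2 (Fin nR → ℂ)).symm (z i) with hZ
  -- rewrite the sums of squares as squared Euclidean norms
  have hGrw : ∀ (M : Matrix (Fin nR) (Fin nT) ℂ) (i : Fin n),
      ∑ j, ‖z i j - M.mulVec (t i) j‖ ^ 2 = ‖Z i - Matrix.toEuclideanLin M (T i)‖ ^ 2 := by
    intro M i
    rw [euclid_norm_sq]
    apply Finset.sum_congr rfl
    intro j _
    congr 1
  have hTnorm : ∀ i, ‖T i‖ ^ 2 = ∑ j, ‖t i j‖ ^ 2 := by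
    intro i; rw [euclid_norm_sq]; rfl
  have hZnorm : ∀ i, ‖Z i‖ ^ 2 = ∑ j, ‖z i j‖ ^ 2 := by
    intro i; rw [euclid_norm_sq]; rfl
  have hTsum : ∑ i, ‖T i‖ ^ 2 ≤ n * P := by
    have : ∑ i, ‖T i‖ ^ 2 = ∑ i, ∑ j, ‖t i j‖ ^ 2 := by
      exact Finset.sum_congr rfl fun i _ => hTnorm i
    rw [this]
    rw [inv_mul_le_iff₀ hn0] at ht
    linarith
  have hZsum : ∑ i, ‖Z i‖ ^ 2 ≤ n * ρ := by
    have : ∑ i, ‖Z i‖ ^ 2 = ∑ i, ∑ j, ‖z i j‖ ^ 2 := by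
      exact Finset.sum_congr rfl fun i _ => hZnorm i
    rw [this]
    rw [inv_mul_le_iff₀ hn0] at hz
    linarith
  -- Cauchy–Schwarz
  have hCS : ∑ i, ‖Z i‖ * ‖T i‖ ≤ n * Real.sqrt (P * ρ) := by
    calc ∑ i, ‖Z i‖ * ‖T i‖
        ≤ Real.sqrt (∑ i, ‖Z i‖ ^ 2) * Real.sqrt (∑ i, ‖T i‖ ^ 2) :=
          Real.sum_mul_le_sqrt_mul_sqrt _ _ _
      _ ≤ Real.sqrt (n * ρ) * Real.sqrt (n * P) := by
          apply mul_le_mul (Real.sqrt_le_sqrt hZsum) (Real.sqrt_le_sqrt hTsum)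
            (Real.sqrt_nonneg _) (Real.sqrt_nonneg _)
      _ = n * Real.sqrt (P * ρ) := by
          rw [← Real.sqrt_mul (by positivity)]
          have h9 : (n:ℝ) * ρ * ((n:ℝ) * P) = (n:ℝ) ^ 2 * (P * ρ) := by ring
          rw [h9, Real.sqrt_mul (by positivity), Real.sqrt_sq (le_of_lt hn0)]
  -- main sum bound
  have hmain : ∑ i, ((∑ j, ‖z i j - g'.mulVec (t i) j‖ ^ 2) -
      ∑ j, ‖z i j - g.mulVec (t i) j‖ ^ 2) ≤
      2 * n * (Real.sqrt (P * ρ) + a * P) * C := by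
    calc ∑ i, ((∑ j, ‖z i j - g'.mulVec (t i) j‖ ^ 2) -
          ∑ j, ‖z i j - g.mulVec (t i) j‖ ^ 2)
        ≤ ∑ i, 2 * C * (a * ‖T i‖ ^ 2 + ‖Z i‖ * ‖T i‖) := by
          apply Finset.sum_le_sum
          intro i _
          rw [hGrw g i, hGrw g' i]
          exact key_pointwise a g g' hg hg' (Z i) (T i)
      _ = 2 * C * ∑ i, (a * ‖T i‖ ^ 2 + ‖Z i‖ * ‖T i‖) := by
          rw [Finset.mul_sum]
      _ ≤ 2 * C * (a * (n * P) + n * Real.sqrt (P * ρ)) := by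
          apply mul_le_mul_of_nonneg_left _ (by positivity)
          rw [Finset.sum_add_distrib, ← Finset.mul_sum]
          have := mul_le_mul_of_nonneg_left hTsum (le_of_lt ha)
          linarith
      _ = 2 * n * (Real.sqrt (P * ρ) + a * P) * C := by ring
  refine ⟨hmain, ?_⟩
  -- second part
  have hlog2 : (0 : ℝ) < Real.log 2 := Real.log_pos (by norm_num)
  rw [← Real.exp_sum, ← Real.exp_sum, ← Real.exp_sub,
    Real.rpow_def_of_pos (by norm_num : (0:ℝ) < 2)]
  apply Real.exp_le_exp.2
  have heq : Real.log 2 * ((2 * n / (σ ^ 2 * Real.log 2)) * (Real.sqrt (P * ρ) + a * P) * C)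
      = (σ ^ 2)⁻¹ * (2 * n * (Real.sqrt (P * ρ) + a * P) * C) := by
    field_simp
  rw [heq]
  have : (∑ i, -(σ ^ 2)⁻¹ * ∑ j, ‖z i j - g.mulVec (t i) j‖ ^ 2) -
      ∑ i, -(σ ^ 2)⁻¹ * ∑ j, ‖z i j - g'.mulVec (t i) j‖ ^ 2
      = (σ ^ 2)⁻¹ * ∑ i, ((∑ j, ‖z i j - g'.mulVec (t i) j‖ ^ 2) -
          ∑ j, ‖z i j - g.mulVec (t i) j‖ ^ 2) := by
    rw [← Finset.sum_sub_distrib, Finset.mul_sum]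
    apply Finset.sum_congr rfl
    intro i _
    ring
  rw [this]
  exact mul_le_mul_of_nonneg_left hmain (by positivity)
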